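/- arXiv:1203.0922 — 3 statements merged into one kernel-verified Lean document; each statement's English description precedes it below -/
import Mathlib

section
/- Let F_m(q) := Σ_{σ ∈ S_m} q^{aid(σ)}. For every n ≥ 2 and every j ∈ [n], the sum Σ q^{aid(σ)}, taken over all σ ∈ S_n with σ(n−j+1) = n, equals: F_{n−1}(q) if j = 1; the Gaussian binomial coefficient [n−1 choose j−1]_q times q^j·F_{j−1}(q)·F_{n−j}(q) if 2 ≤ j ≤ n−1; and q·F_{n−1}(q) if j = n. -/
attribute [local instance] Classical.propDecidable

open Polynomial

/-- The number of descents of the word `w = w₁ ⋯ w_m`: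
indices `i ∈ [m-1]` with `w_i > w_{i+1}`. -/
noncomputable def desF {m : ℕ} (w : Fin m → ℕ) : ℕ :=
  (Finset.univ.filter fun i : Fin (m - 1) =>
      w ⟨(i : ℕ) + 1, by have := i.2; omega⟩ < w ⟨(i : ℕ), by have := i.2; omega⟩).card

/-- The major index of the word `w = w₁ ⋯ w_m`: the sum of the (1-indexed) descent
positions. -/
noncomputable def majF {m : ℕ} (w : Fin m → ℕ) : ℕ :=
  ∑ i ∈ (Finset.univ.filter fun i : Fin (m - 1) =>
      w ⟨(i : ℕ) + 1, by have := i.2; omega⟩ < w ⟨(i : ℕ), by have := i.2; omega⟩),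
    ((i : ℕ) + 1)

/-- The number of inversions of the word `w`: pairs of positions `i < j` with
`w_i > w_j`. -/
noncomputable def invW {m : ℕ} (w : Fin m → ℕ) : ℕ :=
  (Finset.univ.filter fun p : Fin m × Fin m => p.1 < p.2 ∧ w p.2 < w p.1).card

/-- The number of admissible inversions of the word `w`: inversions `(w_i, w_j)`
(`i < j`, `w_i > w_j`) such that either `i > 1` and `w_{i-1} < w_i`, or there is a `k`
with `i < k < j` and `w_i < w_k`. -/
noncomputable def aiW {m : ℕ} (w : Fin m → ℕ) : ℕ :=
  (Finset.univ.filter fun p : Fin m × Fin m =>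
      p.1 < p.2 ∧ w p.2 < w p.1 ∧
        ((0 < (p.1 : ℕ) ∧ w ⟨(p.1 : ℕ) - 1, by have := p.1.2; omega⟩ < w p.1) ∨
          ∃ k : Fin m, p.1 < k ∧ k < p.2 ∧ w p.1 < w k)).card

/-- The permutation `σ ∈ S_n` viewed as the word `σ(1) σ(2) ⋯ σ(n)`. -/
def permWord {n : ℕ} (σ : Equiv.Perm (Fin n)) : Fin n → ℕ := fun i => (σ i : ℕ)

/-- The number of excedances of `σ ∈ S_n`: positions `i` with `σ(i) > i`. -/
noncomputable def excP {n : ℕ} (σ : Equiv.Perm (Fin n)) : ℕ :=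
  (Finset.univ.filter fun i : Fin n => (i : ℕ) < (σ i : ℕ)).card

/-- `aid σ = ai σ + des σ`: the number of admissible inversions of `σ` plus the number
of descents of `σ`. -/
noncomputable def aidP {n : ℕ} (σ : Equiv.Perm (Fin n)) : ℕ :=
  aiW (permWord σ) + desF (permWord σ)

/-- The Gaussian (q-binomial) coefficient `[n choose k]_q`, defined by the q-Pascal
recurrence `[n+1 choose k+1]_q = [n choose k]_q + q^{k+1} [n choose k+1]_q`. -/
noncomputable def qBinom : ℕ → ℕ → Polynomial ℤ
  | _, 0 => 1
  | 0, _ + 1 => 0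
  | n + 1, k + 1 => qBinom n k + Polynomial.X ^ (k + 1) * qBinom n (k + 1)

/-- `F_m(q) = ∑_{σ ∈ S_m} q^{aid σ}`. -/
noncomputable def aidGen (m : ℕ) : Polynomial ℤ :=
  ∑ σ : Equiv.Perm (Fin m), Polynomial.X ^ aidP σ

noncomputable def aN (W : ℕ → ℕ) (m : ℕ) : ℕ :=
  ∑ i ∈ Finset.range m, ∑ j ∈ Finset.range m,
    if i < j ∧ W j < W i ∧ ((0 < i ∧ W (i-1) < W i) ∨ ∃ k, i < k ∧ k < j ∧ W i < W k)
    then 1 else 0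

noncomputable def dN (W : ℕ → ℕ) (m : ℕ) : ℕ :=
  ∑ i ∈ Finset.range (m-1), if W (i+1) < W i then 1 else 0

lemma aiW_eq_aN {m : ℕ} (w : Fin m → ℕ) (W : ℕ → ℕ)
    (hW : ∀ i : Fin m, W i = w i) : aiW w = aN W m := by
  rw [aiW, Finset.card_filter, ← Finset.univ_product_univ, Finset.sum_product, aN,
    ← Fin.sum_univ_eq_sum_range (fun i => ∑ j ∈ Finset.range m,
      if i < j ∧ W j < W i ∧ ((0 < i ∧ W (i-1) < W i) ∨ ∃ k, i < k ∧ k < j ∧ W i < W k)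
      then 1 else 0) m]
  refine Finset.sum_congr rfl fun i _ => ?_
  rw [← Fin.sum_univ_eq_sum_range]
  refine Finset.sum_congr rfl fun j _ => ?_
  refine if_congr ?_ rfl rfl
  have h1 : W ((i:ℕ) - 1) = w ⟨(i:ℕ) - 1, by have := i.2; omega⟩ :=
    hW ⟨(i:ℕ) - 1, by have := i.2; omega⟩
  have h2 : W (j:ℕ) = w j := hW _
  have h3 : W (i:ℕ) = w i := hW _
  constructor
  · rintro ⟨hlt, hinv, hadm⟩
    refine ⟨hlt, by rw [h2, h3]; exact hinv, ?_⟩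
    rcases hadm with ⟨h0, hd⟩ | ⟨k, hk1, hk2, hk3⟩
    · exact Or.inl ⟨h0, by rw [h1, h3]; exact hd⟩
    · exact Or.inr ⟨(k:ℕ), hk1, hk2, by rw [h3, hW k]; exact hk3⟩
  · rintro ⟨hlt, hinv, hadm⟩
    refine ⟨hlt, by rw [h2, h3] at hinv; exact hinv, ?_⟩
    rcases hadm with ⟨h0, hd⟩ | ⟨k, hk1, hk2, hk3⟩
    · exact Or.inl ⟨h0, by rw [h1, h3] at hd; exact hd⟩
    · refine Or.inr ⟨⟨k, lt_trans hk2 j.2⟩, hk1, hk2, ?_⟩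
      rw [h3, hW ⟨k, lt_trans hk2 j.2⟩] at hk3; exact hk3

lemma desF_eq_dN {m : ℕ} (w : Fin m → ℕ) (W : ℕ → ℕ)
    (hW : ∀ i : Fin m, W i = w i) : desF w = dN W m := by
  rw [desF, Finset.card_filter, dN,
    ← Fin.sum_univ_eq_sum_range (fun i => if W (i+1) < W i then 1 else 0) (m-1)]
  refine Finset.sum_congr rfl fun i _ => ?_
  refine if_congr ?_ rfl rfl
  have h1 : W ((i:ℕ) + 1) = w ⟨(i:ℕ) + 1, by have := i.2; omega⟩ :=
    hW ⟨(i:ℕ) + 1, by have := i.2; omega⟩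
  have h2 : W (i:ℕ) = w ⟨(i:ℕ), by have := i.2; omega⟩ :=
    hW ⟨(i:ℕ), by have := i.2; omega⟩
  rw [h1, h2]

lemma aN_congr {m : ℕ} (W W' : ℕ → ℕ)
    (h : ∀ i j, i < m → j < m → (W i < W j ↔ W' i < W' j)) : aN W m = aN W' m := by
  rw [aN, aN]
  refine Finset.sum_congr rfl fun i hi => Finset.sum_congr rfl fun j hj => ?_
  rw [Finset.mem_range] at hi hj
  refine if_congr ?_ rfl rfl
  constructor
  · rintro ⟨hlt, hinv, hadm⟩
    refine ⟨hlt, (h j i hj hi).mp hinv, ?_⟩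
    rcases hadm with ⟨h0, hd⟩ | ⟨k, hk1, hk2, hk3⟩
    · exact Or.inl ⟨h0, (h _ _ (by omega) hi).mp hd⟩
    · exact Or.inr ⟨k, hk1, hk2, (h _ _ hi (by omega)).mp hk3⟩
  · rintro ⟨hlt, hinv, hadm⟩
    refine ⟨hlt, (h j i hj hi).mpr hinv, ?_⟩
    rcases hadm with ⟨h0, hd⟩ | ⟨k, hk1, hk2, hk3⟩
    · exact Or.inl ⟨h0, (h _ _ (by omega) hi).mpr hd⟩
    · exact Or.inr ⟨k, hk1, hk2, (h _ _ hi (by omega)).mpr hk3⟩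

lemma dN_congr {m : ℕ} (W W' : ℕ → ℕ)
    (h : ∀ i j, i < m → j < m → (W i < W j ↔ W' i < W' j)) : dN W m = dN W' m := by
  rw [dN, dN]
  refine Finset.sum_congr rfl fun i hi => ?_
  rw [Finset.mem_range] at hi
  exact if_congr (h _ _ (by omega) (by omega)) rfl rfl

lemma sum_range_split (f : ℕ → ℕ) (p b n : ℕ) (hn : n = p + (1+b)) :
    ∑ i ∈ Finset.range n, f i
      = (∑ i ∈ Finset.range p, f i) + f p + ∑ t ∈ Finset.range b, f (p+1+t) := by
  subst hn
  rw [Finset.sum_range_add, Finset.sum_range_add, Finset.sum_range_one]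
  have e : ∀ t, p + (1 + t) = p + 1 + t := fun t => by omega
  simp only [e, Nat.add_zero]
  omega

lemma dN_decomp (W : ℕ → ℕ) (n p : ℕ) (hp : p < n)
    (hmax : ∀ i, i < n → i ≠ p → W i < W p) :
    dN W n = dN W p + dN (fun t => W (p+1+t)) (n-1-p) + (if p+1 < n then 1 else 0) := by
  set b := n - 1 - p with hb
  have hn1 : n - 1 = p + b := by omega
  rw [dN, hn1, Finset.sum_range_add]
  have h1 : ∑ i ∈ Finset.range p, (if W (i+1) < W i then 1 else 0) = dN W p := by
    rcases Nat.eq_zero_or_pos p with h0 | h0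
    · subst h0; simp [dN]
    · have hp1 : p = (p - 1) + 1 := by omega
      rw [hp1, Finset.sum_range_succ, dN]
      have : ¬ W (p - 1 + 1) < W (p - 1) := by
        have := hmax (p - 1) (by omega) (by omega)
        have e : p - 1 + 1 = p := by omega
        rw [e]; omega
      rw [if_neg this]
      simp [Nat.add_sub_cancel]
  have h2 : ∑ t ∈ Finset.range b, (if W (p + t + 1) < W (p + t) then 1 else 0)
      = dN (fun t => W (p+1+t)) b + (if p + 1 < n then 1 else 0) := by
    clear h1
    clear_value b
    cases b with
    | zero =>
      have : ¬ p + 1 < n := by omega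
      simp [dN, this]
    | succ b' =>
      rw [Finset.sum_range_succ']
      have e1 : (if W (p + 0 + 1) < W (p + 0) then 1 else 0) = 1 := by
        have : W (p + 0 + 1) < W (p + 0) := by
          have := hmax (p + 1) (by omega) (by omega)
          simpa using this
        rw [if_pos this]
      rw [e1]
      have e2 : ∑ s ∈ Finset.range b',
          (if W (p + (s + 1) + 1) < W (p + (s + 1)) then 1 else 0)
          = dN (fun t => W (p+1+t)) (b' + 1) := by
        rw [dN]
        have : b' + 1 - 1 = b' := by omega
        rw [this]
        refine Finset.sum_congr rfl fun s _ => ?_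
        have e3 : p + (s + 1) + 1 = p + 1 + (s + 1) := by omega
        have e4 : p + (s + 1) = p + 1 + s := by omega
        rw [e3, e4]
      rw [e2]
      have : p + 1 < n := by omega
      rw [if_pos this]
  omega

lemma aN_decomp (W : ℕ → ℕ) (n p : ℕ) (hp : p < n)
    (hmax : ∀ i, i < n → i ≠ p → W i < W p) :
    aN W n = aN W p + aN (fun t => W (p+1+t)) (n-1-p)
      + (if 0 < p then n-1-p else 0)
      + ∑ i ∈ Finset.range p, ∑ t ∈ Finset.range (n-1-p),
          if W (p+1+t) < W i then 1 else 0 := by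
  set b := n - 1 - p with hb
  have hn : n = p + (1 + b) := by omega
  set C : ℕ → ℕ → Prop := fun i j =>
    i < j ∧ W j < W i ∧ ((0 < i ∧ W (i-1) < W i) ∨ ∃ k, i < k ∧ k < j ∧ W i < W k)
    with hC
  have hF : ∀ i, ∑ j ∈ Finset.range n, (if C i j then 1 else 0)
      = (∑ j ∈ Finset.range p, if C i j then 1 else 0)
        + (if C i p then 1 else 0)
        + ∑ t ∈ Finset.range b, (if C i (p+1+t) then 1 else 0) := by
    intro i
    exact sum_range_split (fun j => if C i j then 1 else 0) p b n hn
  -- main three claims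
  have C1 : ∀ i ∈ Finset.range p,
      (∑ j ∈ Finset.range n, if C i j then 1 else 0)
      = (∑ j ∈ Finset.range p, if C i j then 1 else 0)
        + ∑ t ∈ Finset.range b, (if W (p+1+t) < W i then 1 else 0) := by
    intro i hi
    rw [Finset.mem_range] at hi
    rw [hF i]
    have hmid : ¬ C i p := by
      rintro ⟨-, h2, -⟩
      have := hmax i (by omega) (by omega)
      omega
    rw [if_neg hmid]
    have : ∀ t ∈ Finset.range b, (if C i (p+1+t) then 1 else 0)
        = (if W (p+1+t) < W i then 1 else 0) := by
      intro t ht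
      rw [Finset.mem_range] at ht
      refine if_congr ?_ rfl rfl
      constructor
      · exact fun h => h.2.1
      · intro h
        exact ⟨by omega, h, Or.inr ⟨p, hi, by omega, hmax i (by omega) (by omega)⟩⟩
    rw [Finset.sum_congr rfl this]
    omega
  have C2 : (∑ j ∈ Finset.range n, if C p j then 1 else 0)
      = (if 0 < p then b else 0) := by
    rw [hF p]
    have e1 : ∀ j ∈ Finset.range p, (if C p j then 1 else 0) = 0 := by
      intro j hj
      rw [Finset.mem_range] at hj
      rw [if_neg]; rintro ⟨h1, -, -⟩; omega
    rw [Finset.sum_congr rfl e1, Finset.sum_const_zero]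
    have e2 : ¬ C p p := by rintro ⟨h1, -, -⟩; omega
    rw [if_neg e2]
    have e3 : ∀ t ∈ Finset.range b, (if C p (p+1+t) then 1 else 0)
        = (if 0 < p then 1 else 0) := by
      intro t ht
      rw [Finset.mem_range] at ht
      refine if_congr ?_ rfl rfl
      constructor
      · rintro ⟨-, -, hadm⟩
        rcases hadm with ⟨h0, -⟩ | ⟨k, hk1, hk2, hk3⟩
        · exact h0
        · exfalso
          have := hmax k (by omega) (by omega)
          omega
      · intro h0
        refine ⟨by omega, hmax (p+1+t) (by omega) (by omega),
          Or.inl ⟨h0, hmax (p-1) (by omega) (by omega)⟩⟩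
    rw [Finset.sum_congr rfl e3, Finset.sum_const, Finset.card_range]
    rcases Nat.eq_zero_or_pos p with h0 | h0
    · simp [h0]
    · simp [h0]
  have C3 : ∀ s ∈ Finset.range b,
      (∑ j ∈ Finset.range n, if C (p+1+s) j then 1 else 0)
      = ∑ t ∈ Finset.range b,
          (if (s < t ∧ W (p+1+t) < W (p+1+s) ∧
            ((0 < s ∧ W (p+1+(s-1)) < W (p+1+s)) ∨
              ∃ k, s < k ∧ k < t ∧ W (p+1+s) < W (p+1+k))) then 1 else 0) := by
    intro s hs
    rw [Finset.mem_range] at hs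
    rw [hF (p+1+s)]
    have e1 : ∀ j ∈ Finset.range p, (if C (p+1+s) j then 1 else 0) = 0 := by
      intro j hj
      rw [Finset.mem_range] at hj
      rw [if_neg]; rintro ⟨h1, -, -⟩; omega
    rw [Finset.sum_congr rfl e1, Finset.sum_const_zero]
    have e2 : ¬ C (p+1+s) p := by rintro ⟨h1, -, -⟩; omega
    rw [if_neg e2]
    have e3 : ∀ t ∈ Finset.range b, (if C (p+1+s) (p+1+t) then 1 else 0)
        = (if (s < t ∧ W (p+1+t) < W (p+1+s) ∧
            ((0 < s ∧ W (p+1+(s-1)) < W (p+1+s)) ∨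
              ∃ k, s < k ∧ k < t ∧ W (p+1+s) < W (p+1+k))) then 1 else 0) := by
      intro t ht
      rw [Finset.mem_range] at ht
      refine if_congr ?_ rfl rfl
      constructor
      · rintro ⟨h1, h2, hadm⟩
        refine ⟨by omega, h2, ?_⟩
        rcases hadm with ⟨-, hd⟩ | ⟨k, hk1, hk2, hk3⟩
        · rcases Nat.eq_zero_or_pos s with h0 | h0
          · exfalso
            have e : p + 1 + s - 1 = p := by omega
            rw [e] at hd
            have := hmax (p+1+s) (by omega) (by omega)
            omega
          · left
            refine ⟨h0, ?_⟩
            have e : p + 1 + s - 1 = p + 1 + (s - 1) := by omega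
            rw [e] at hd
            exact hd
        · right
          refine ⟨k - (p+1), by omega, by omega, ?_⟩
          have e : p + 1 + (k - (p+1)) = k := by omega
          rw [e]
          exact hk3
      · rintro ⟨h1, h2, hadm⟩
        refine ⟨by omega, h2, ?_⟩
        rcases hadm with ⟨h0, hd⟩ | ⟨k, hk1, hk2, hk3⟩
        · left
          refine ⟨by omega, ?_⟩
          have e : p + 1 + s - 1 = p + 1 + (s - 1) := by omega
          rw [e]
          exact hd
        · exact Or.inr ⟨p+1+k, by omega, by omega, hk3⟩
    rw [Finset.sum_congr rfl e3]
    omega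
  -- assemble
  have expand : aN W n = (∑ i ∈ Finset.range p, ∑ j ∈ Finset.range n, if C i j then 1 else 0)
      + (∑ j ∈ Finset.range n, if C p j then 1 else 0)
      + ∑ s ∈ Finset.range b, ∑ j ∈ Finset.range n, (if C (p+1+s) j then 1 else 0) := by
    have e0 : aN W n = ∑ i ∈ Finset.range n, ∑ j ∈ Finset.range n, (if C i j then 1 else 0) := rfl
    rw [e0]
    exact sum_range_split (fun i => ∑ j ∈ Finset.range n, (if C i j then 1 else 0)) p b n hn
  rw [expand, Finset.sum_congr rfl C1, Finset.sum_congr rfl C3, C2]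
  rw [Finset.sum_add_distrib]
  have : aN W p = ∑ i ∈ Finset.range p, ∑ j ∈ Finset.range p, if C i j then 1 else 0 := rfl
  rw [← this]
  have : aN (fun t => W (p+1+t)) b = ∑ s ∈ Finset.range b, ∑ t ∈ Finset.range b,
      (if (s < t ∧ W (p+1+t) < W (p+1+s) ∧
        ((0 < s ∧ W (p+1+(s-1)) < W (p+1+s)) ∨
          ∃ k, s < k ∧ k < t ∧ W (p+1+s) < W (p+1+k))) then 1 else 0) := rfl
  rw [← this]
  omega

noncomputable def crossS (m : ℕ) (S : Finset ℕ) : ℕ :=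
  ∑ x ∈ Finset.range m, ∑ y ∈ Finset.range m, if x ∈ S ∧ y ∉ S ∧ x < y then 1 else 0

lemma crossS_zero_left (m : ℕ) : crossS m ∅ = 0 := by
  simp [crossS]

lemma qBinom_sum (m k : ℕ) :
    ∑ S ∈ (Finset.range m).powersetCard k, (Polynomial.X : Polynomial ℤ) ^ crossS m S
      = qBinom m k := by
  induction m generalizing k with
  | zero =>
    cases k with
    | zero => simp [qBinom, crossS]
    | succ k => rw [Finset.range_zero, show Finset.powersetCard (k+1) (∅ : Finset ℕ) = ∅ from rfl]; simp [qBinom]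
  | succ m ih =>
    cases k with
    | zero => simp [qBinom, crossS_zero_left]
    | succ k =>
      have hrange : Finset.range (m+1) = insert m (Finset.range m) := by
        rw [Finset.range_add_one]
      have hm : m ∉ Finset.range m := by simp
      rw [hrange, Finset.powersetCard_succ_insert hm]
      have hdisj : Disjoint ((Finset.range m).powersetCard (k+1))
          (Finset.image (insert m) ((Finset.range m).powersetCard k)) := by
        rw [Finset.disjoint_left]
        intro S hS hS'
        rw [Finset.mem_powersetCard] at hS
        rw [Finset.mem_image] at hS'
        obtain ⟨T, hT, rfl⟩ := hS'
        have : m ∈ insert m T := Finset.mem_insert_self m T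
        have := hS.1 this
        simp at this
      rw [Finset.sum_union hdisj]
      have part1 : ∑ S ∈ (Finset.range m).powersetCard (k+1),
          (Polynomial.X : Polynomial ℤ) ^ crossS (m+1) S
          = Polynomial.X ^ (k+1) * qBinom m (k+1) := by
        rw [← ih (k+1), Finset.mul_sum]
        refine Finset.sum_congr rfl fun S hS => ?_
        rw [Finset.mem_powersetCard] at hS
        have hSsub := hS.1
        have hScard := hS.2
        have hmS : m ∉ S := fun h => by have := hSsub h; simp at this
        have hcr : crossS (m+1) S = crossS m S + (k+1) := by
          rw [crossS, Finset.sum_range_succ]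
          have outerm : ∑ y ∈ Finset.range (m+1), (if m ∈ S ∧ y ∉ S ∧ m < y then 1 else 0)
              = 0 := by
            refine Finset.sum_eq_zero fun y _ => ?_
            rw [if_neg]; rintro ⟨h1, -, -⟩; exact hmS h1
          rw [outerm, Nat.add_zero]
          have inner : ∀ x ∈ Finset.range m,
              (∑ y ∈ Finset.range (m+1), if x ∈ S ∧ y ∉ S ∧ x < y then 1 else 0)
              = (∑ y ∈ Finset.range m, if x ∈ S ∧ y ∉ S ∧ x < y then 1 else 0)
                + (if x ∈ S then 1 else 0) := by
            intro x hx
            rw [Finset.mem_range] at hx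
            rw [Finset.sum_range_succ]
            congr 1
            refine if_congr ?_ rfl rfl
            constructor
            · exact fun h => h.1
            · exact fun h => ⟨h, hmS, hx⟩
          rw [Finset.sum_congr rfl inner, Finset.sum_add_distrib, crossS]
          congr 1
          have : ∑ x ∈ Finset.range m, (if x ∈ S then 1 else 0) = S.card := by
            rw [Finset.sum_ite_mem, Finset.sum_const, smul_eq_mul, mul_one]
            congr 1
            exact Finset.inter_eq_right.mpr hSsub
          rw [this, hScard]
        rw [hcr, pow_add, mul_comm]
      have part2 : ∑ S ∈ Finset.image (insert m) ((Finset.range m).powersetCard k),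
          (Polynomial.X : Polynomial ℤ) ^ crossS (m+1) S = qBinom m k := by
        rw [Finset.sum_image, ← ih k]
        · refine Finset.sum_congr rfl fun T hT => ?_
          rw [Finset.mem_powersetCard] at hT
          have hTsub := hT.1
          have hmT : m ∉ T := fun h => by have := hTsub h; simp at this
          congr 1
          rw [crossS, crossS, Finset.sum_range_succ]
          have outerm : ∑ y ∈ Finset.range (m+1),
              (if m ∈ insert m T ∧ y ∉ insert m T ∧ m < y then 1 else 0) = 0 := by
            refine Finset.sum_eq_zero fun y hy => ?_
            rw [Finset.mem_range] at hy
            rw [if_neg]; rintro ⟨-, -, h3⟩; omega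
          rw [outerm, Nat.add_zero]
          refine Finset.sum_congr rfl fun x hx => ?_
          rw [Finset.mem_range] at hx
          rw [Finset.sum_range_succ]
          have lastterm : (if x ∈ insert m T ∧ m ∉ insert m T ∧ x < m then 1 else 0) = 0 := by
            rw [if_neg]; rintro ⟨-, h2, -⟩; exact h2 (Finset.mem_insert_self m T)
          rw [lastterm, Nat.add_zero]
          refine Finset.sum_congr rfl fun y hy => ?_
          rw [Finset.mem_range] at hy
          refine if_congr ?_ rfl rfl
          constructor
          · rintro ⟨h1, h2, h3⟩
            refine ⟨?_, fun hc => h2 (Finset.mem_insert_of_mem hc), h3⟩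
            rcases Finset.mem_insert.mp h1 with h | h
            · omega
            · exact h
          · rintro ⟨h1, h2, h3⟩
            refine ⟨Finset.mem_insert_of_mem h1, ?_, h3⟩
            intro hc
            rcases Finset.mem_insert.mp hc with h | h
            · omega
            · exact h2 h
        · intro T1 h1 T2 h2 heq
          rw [Finset.mem_coe, Finset.mem_powersetCard] at h1 h2
          have hm1 : m ∉ T1 := fun h => by have := h1.1 h; simp at this
          have hm2 : m ∉ T2 := fun h => by have := h2.1 h; simp at this
          have := congrArg (fun s => Finset.erase s m) heq
          simpa [Finset.erase_insert, hm1, hm2] using this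
      rw [part1, part2]
      show _ = qBinom m k + Polynomial.X ^ (k + 1) * qBinom m (k + 1)
      ring

/-! ### Construction of a permutation from `(S, α, β)` -/

section Build

variable (n p : ℕ) (hp : p < n) (S : Finset ℕ)
  (hS : S ⊆ Finset.range (n-1)) (hcard : S.card = n-1-p)

lemma cardA (hp : p < n) (hS : S ⊆ Finset.range (n-1)) (hcard : S.card = n-1-p) :
    (Finset.range (n-1) \ S).card = p := by
  rw [Finset.card_sdiff_of_subset hS, Finset.card_range, hcard]
  omega

noncomputable def buildF (α : Equiv.Perm (Fin p)) (β : Equiv.Perm (Fin (n-1-p)))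
    (i : Fin n) : Fin n :=
  if h : (i : ℕ) < p then
    ⟨((Finset.range (n-1) \ S).orderIsoOfFin (cardA n p S hp hS hcard) (α ⟨i, h⟩) : ℕ), by
      have hm := ((Finset.range (n-1) \ S).orderIsoOfFin (cardA n p S hp hS hcard) (α ⟨i, h⟩)).2
      rw [Finset.mem_sdiff, Finset.mem_range] at hm
      omega⟩
  else if h2 : (i : ℕ) = p then ⟨n-1, by omega⟩
  else
    ⟨((S.orderIsoOfFin hcard) (β ⟨(i : ℕ) - p - 1, by have := i.2; omega⟩) : ℕ), by
      have hm := ((S.orderIsoOfFin hcard) (β ⟨(i : ℕ) - p - 1, by have := i.2; omega⟩)).2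
      have := hS hm
      rw [Finset.mem_range] at this
      omega⟩

variable (α : Equiv.Perm (Fin p)) (β : Equiv.Perm (Fin (n-1-p)))

lemma buildF_val_lt (i : Fin n) (h : (i : ℕ) < p) :
    (buildF n p hp S hS hcard α β i : ℕ)
      = ((Finset.range (n-1) \ S).orderIsoOfFin (cardA n p S hp hS hcard) (α ⟨i, h⟩) : ℕ) := by
  rw [buildF, dif_pos h]

lemma buildF_val_eq (i : Fin n) (h : (i : ℕ) = p) :
    (buildF n p hp S hS hcard α β i : ℕ) = n - 1 := by
  rw [buildF, dif_neg (by omega), dif_pos h]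

lemma buildF_val_gt (i : Fin n) (h : p < (i : ℕ)) :
    (buildF n p hp S hS hcard α β i : ℕ)
      = ((S.orderIsoOfFin hcard) (β ⟨(i : ℕ) - p - 1, by have := i.2; omega⟩) : ℕ) := by
  rw [buildF, dif_neg (by omega), dif_neg (by omega)]

lemma buildF_mem_lt (i : Fin n) (h : (i : ℕ) < p) :
    (buildF n p hp S hS hcard α β i : ℕ) ∈ Finset.range (n-1) \ S := by
  rw [buildF_val_lt n p hp S hS hcard α β i h]
  exact ((Finset.range (n-1) \ S).orderIsoOfFin (cardA n p S hp hS hcard) (α ⟨i, h⟩)).2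

lemma buildF_mem_gt (i : Fin n) (h : p < (i : ℕ)) :
    (buildF n p hp S hS hcard α β i : ℕ) ∈ S := by
  rw [buildF_val_gt n p hp S hS hcard α β i h]
  exact ((S.orderIsoOfFin hcard) _).2

lemma buildF_injective : Function.Injective (buildF n p hp S hS hcard α β) := by
  intro i i' heq
  have hval : (buildF n p hp S hS hcard α β i : ℕ)
      = (buildF n p hp S hS hcard α β i' : ℕ) := by rw [heq]
  have triA : ∀ x, x ∈ Finset.range (n-1) \ S → x ∉ S ∧ x < n - 1 := by
    intro x hx; rw [Finset.mem_sdiff, Finset.mem_range] at hx; exact ⟨hx.2, hx.1⟩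
  have triS : ∀ x, x ∈ S → x < n - 1 := by
    intro x hx; have := hS hx; rwa [Finset.mem_range] at this
  rcases lt_trichotomy (i : ℕ) p with h1 | h1 | h1 <;>
    rcases lt_trichotomy (i' : ℕ) p with h2 | h2 | h2
  · -- both < p
    rw [buildF_val_lt n p hp S hS hcard α β i h1,
      buildF_val_lt n p hp S hS hcard α β i' h2] at hval
    have e1 := ((Finset.range (n-1) \ S).orderIsoOfFin (cardA n p S hp hS hcard)).injective
      (Subtype.ext hval)
    have e2 := α.injective e1
    rw [Fin.mk.injEq] at e2
    exact Fin.ext e2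
  · exfalso
    rw [buildF_val_lt n p hp S hS hcard α β i h1,
      buildF_val_eq n p hp S hS hcard α β i' h2] at hval
    have := (triA _ (buildF_mem_lt n p hp S hS hcard α β i h1)).2
    rw [buildF_val_lt n p hp S hS hcard α β i h1] at this
    omega
  · exfalso
    have m1 := buildF_mem_lt n p hp S hS hcard α β i h1
    have m2 := buildF_mem_gt n p hp S hS hcard α β i' h2
    rw [hval] at m1
    exact (triA _ m1).1 m2
  · exfalso
    rw [buildF_val_eq n p hp S hS hcard α β i h1,
      buildF_val_lt n p hp S hS hcard α β i' h2] at hval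
    have := (triA _ (buildF_mem_lt n p hp S hS hcard α β i' h2)).2
    rw [buildF_val_lt n p hp S hS hcard α β i' h2] at this
    omega
  · exact Fin.ext (by omega)
  · exfalso
    rw [buildF_val_eq n p hp S hS hcard α β i h1] at hval
    have := triS _ (buildF_mem_gt n p hp S hS hcard α β i' h2)
    rw [← hval] at this
    omega
  · exfalso
    have m1 := buildF_mem_gt n p hp S hS hcard α β i h1
    have m2 := buildF_mem_lt n p hp S hS hcard α β i' h2
    rw [hval] at m1
    exact (triA _ m2).1 m1
  · exfalso
    rw [buildF_val_eq n p hp S hS hcard α β i' h2] at hval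
    have := triS _ (buildF_mem_gt n p hp S hS hcard α β i h1)
    rw [hval] at this
    omega
  · -- both > p
    rw [buildF_val_gt n p hp S hS hcard α β i h1,
      buildF_val_gt n p hp S hS hcard α β i' h2] at hval
    have e1 := (S.orderIsoOfFin hcard).injective (Subtype.ext hval)
    have e2 := β.injective e1
    rw [Fin.mk.injEq] at e2
    exact Fin.ext (by omega)

noncomputable def buildP : Equiv.Perm (Fin n) :=
  Equiv.ofBijective (buildF n p hp S hS hcard α β)
    (Finite.injective_iff_bijective.mp (buildF_injective n p hp S hS hcard α β))

lemma buildP_apply (i : Fin n) :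
    buildP n p hp S hS hcard α β i = buildF n p hp S hS hcard α β i := rfl

end Build

section AidComp

variable (n p : ℕ) (hp : p < n) (S : Finset ℕ)
  (hS : S ⊆ Finset.range (n-1)) (hcard : S.card = n-1-p)
  (α : Equiv.Perm (Fin p)) (β : Equiv.Perm (Fin (n-1-p)))

lemma aidP_buildP :
    aidP (buildP n p hp S hS hcard α β)
      = aidP α + aidP β + crossS (n-1) S
        + ((if 0 < p then n-1-p else 0) + (if p+1 < n then 1 else 0)) := by
  set W : ℕ → ℕ := fun i => if h : i < n then (buildF n p hp S hS hcard α β ⟨i, h⟩ : ℕ) else 0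
    with hWdef
  have hW : ∀ i : Fin n, W (i : ℕ) = permWord (buildP n p hp S hS hcard α β) i := by
    intro i
    show (if h : (i:ℕ) < n then (buildF n p hp S hS hcard α β ⟨(i:ℕ), h⟩ : ℕ) else 0) = _
    rw [dif_pos i.2]
    rfl
  have haid : aidP (buildP n p hp S hS hcard α β) = aN W n + dN W n := by
    rw [aidP, aiW_eq_aN _ W hW, desF_eq_dN _ W hW]
  have hWp : W p = n - 1 := by
    show (if h : p < n then _ else 0) = _
    rw [dif_pos hp]
    exact buildF_val_eq n p hp S hS hcard α β ⟨p, hp⟩ rfl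
  have hWlt : ∀ (i : ℕ) (hi : i < p),
      W i = (((Finset.range (n-1) \ S).orderIsoOfFin (cardA n p S hp hS hcard))
        (α ⟨i, hi⟩) : ℕ) := by
    intro i hi
    show (if h : i < n then _ else 0) = _
    rw [dif_pos (by omega : i < n)]
    exact buildF_val_lt n p hp S hS hcard α β ⟨i, by omega⟩ hi
  have hWgt : ∀ (t : ℕ) (ht : t < n-1-p),
      W (p+1+t) = ((S.orderIsoOfFin hcard) (β ⟨t, ht⟩) : ℕ) := by
    intro t ht
    have hlt : p + 1 + t < n := by omega
    show (if h : p+1+t < n then _ else 0) = _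
    rw [dif_pos hlt]
    rw [buildF_val_gt n p hp S hS hcard α β ⟨p+1+t, hlt⟩ (by simp; omega)]
    exact congrArg (fun x => ((S.orderIsoOfFin hcard) (β x) : ℕ)) (Fin.ext (by simp; omega))
  have hmax : ∀ i, i < n → i ≠ p → W i < W p := by
    intro i hi hne
    rw [hWp]
    rcases lt_trichotomy i p with h | h | h
    · rw [hWlt i h]
      have hm := (((Finset.range (n-1) \ S).orderIsoOfFin (cardA n p S hp hS hcard))
        (α ⟨i, h⟩)).2
      rw [Finset.mem_sdiff, Finset.mem_range] at hm
      exact hm.1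
    · omega
    · have ht : i - p - 1 < n-1-p := by omega
      have hi2 : i = p + 1 + (i - p - 1) := by omega
      rw [hi2, hWgt _ ht]
      have hm := ((S.orderIsoOfFin hcard) (β ⟨i - p - 1, ht⟩)).2
      have := hS hm
      rwa [Finset.mem_range] at this
  -- word for α
  set Wa : ℕ → ℕ := fun i => if h : i < p then (α ⟨i, h⟩ : ℕ) else 0 with hWa
  have hWaP : ∀ i : Fin p, Wa (i : ℕ) = permWord α i := by
    intro i
    show (if h : (i:ℕ) < p then ((α ⟨(i:ℕ), h⟩ : Fin p) : ℕ) else 0) = _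
    rw [dif_pos i.2]
    rfl
  have ha : aN W p + dN W p = aidP α := by
    have hcong : ∀ i j, i < p → j < p → (W i < W j ↔ Wa i < Wa j) := by
      intro i j hi hj
      rw [hWlt i hi, hWlt j hj]
      show _ ↔ (if h : i < p then ((α ⟨i, h⟩ : Fin p) : ℕ) else 0)
        < (if h : j < p then ((α ⟨j, h⟩ : Fin p) : ℕ) else 0)
      rw [dif_pos hi, dif_pos hj]
      simp
    rw [aN_congr W Wa hcong, dN_congr W Wa hcong, aidP,
      aiW_eq_aN (permWord α) Wa hWaP, desF_eq_dN (permWord α) Wa hWaP]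
  -- word for β
  set Wb : ℕ → ℕ := fun t => if h : t < n-1-p then (β ⟨t, h⟩ : ℕ) else 0 with hWb
  have hWbP : ∀ t : Fin (n-1-p), Wb (t : ℕ) = permWord β t := by
    intro t
    show (if h : (t:ℕ) < n-1-p then ((β ⟨(t:ℕ), h⟩ : Fin (n-1-p)) : ℕ) else 0) = _
    rw [dif_pos t.2]
    rfl
  have hbb : aN (fun t => W (p+1+t)) (n-1-p) + dN (fun t => W (p+1+t)) (n-1-p)
      = aidP β := by
    have hcong : ∀ s t, s < n-1-p → t < n-1-p →
        ((fun t => W (p+1+t)) s < (fun t => W (p+1+t)) t ↔ Wb s < Wb t) := by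
      intro s t hs ht
      show W (p+1+s) < W (p+1+t) ↔ _
      rw [hWgt s hs, hWgt t ht]
      show _ ↔ (if h : s < n-1-p then ((β ⟨s, h⟩ : Fin (n-1-p)) : ℕ) else 0)
        < (if h : t < n-1-p then ((β ⟨t, h⟩ : Fin (n-1-p)) : ℕ) else 0)
      rw [dif_pos hs, dif_pos ht]
      simp
    rw [aN_congr _ Wb hcong, dN_congr _ Wb hcong, aidP,
      aiW_eq_aN (permWord β) Wb hWbP, desF_eq_dN (permWord β) Wb hWbP]
  -- cross part
  have hcs : crossS (n-1) S
      = ∑ a ∈ Finset.range (n-1) \ S, ∑ x ∈ S, if x < a then 1 else 0 := by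
    rw [crossS, Finset.sum_comm]
    have inner : ∀ y ∈ Finset.range (n-1),
        (∑ x ∈ Finset.range (n-1), if x ∈ S ∧ y ∉ S ∧ x < y then 1 else 0)
        = if y ∈ Finset.range (n-1) \ S then (∑ x ∈ S, if x < y then 1 else 0) else 0 := by
      intro y hy
      by_cases hyS : y ∈ S
      · rw [if_neg (by rw [Finset.mem_sdiff]; tauto)]
        refine Finset.sum_eq_zero fun x _ => ?_
        rw [if_neg]
        rintro ⟨-, h2, -⟩
        exact h2 hyS
      · rw [if_pos (by rw [Finset.mem_sdiff]; exact ⟨hy, hyS⟩)]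
        have : ∀ x ∈ Finset.range (n-1), (if x ∈ S ∧ y ∉ S ∧ x < y then 1 else 0)
            = if x ∈ S then (if x < y then 1 else 0) else 0 := by
          intro x hx
          by_cases hxS : x ∈ S
          · simp [hxS, hyS]
          · simp [hxS]
        rw [Finset.sum_congr rfl this, Finset.sum_ite_mem,
          Finset.inter_eq_right.mpr hS]
    rw [Finset.sum_congr rfl inner, Finset.sum_ite_mem,
      Finset.inter_eq_right.mpr Finset.sdiff_subset]
  have hcross : (∑ i ∈ Finset.range p, ∑ t ∈ Finset.range (n-1-p),
      if W (p+1+t) < W i then 1 else 0) = crossS (n-1) S := by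
    rw [hcs]
    rw [← Fin.sum_univ_eq_sum_range (fun i => ∑ t ∈ Finset.range (n-1-p),
      if W (p+1+t) < W i then 1 else 0) p]
    have e1 : ∀ i : Fin p, (∑ t ∈ Finset.range (n-1-p), if W (p+1+t) < W (i:ℕ) then 1 else 0)
        = ∑ x ∈ S, if x < (((Finset.range (n-1) \ S).orderIsoOfFin
            (cardA n p S hp hS hcard)) (α i) : ℕ) then 1 else 0 := by
      intro i
      rw [← Fin.sum_univ_eq_sum_range (fun t =>
        if W (p+1+t) < W (i:ℕ) then 1 else 0) (n-1-p)]
      have e1a : ∀ t : Fin (n-1-p), (if W (p+1+(t:ℕ)) < W (i:ℕ) then 1 else 0)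
          = (if ((S.orderIsoOfFin hcard) (β t) : ℕ) < (((Finset.range (n-1) \ S).orderIsoOfFin
              (cardA n p S hp hS hcard)) (α i) : ℕ) then 1 else 0) := by
        intro t
        rw [hWgt _ t.2, hWlt _ i.2]
      rw [Finset.sum_congr rfl (fun t _ => e1a t)]
      rw [Equiv.sum_comp β (fun t => if ((S.orderIsoOfFin hcard) t : ℕ)
          < (((Finset.range (n-1) \ S).orderIsoOfFin (cardA n p S hp hS hcard)) (α i) : ℕ)
          then 1 else 0)]
      rw [← Finset.sum_coe_sort S (fun x => if x < (((Finset.range (n-1) \ S).orderIsoOfFin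
          (cardA n p S hp hS hcard)) (α i) : ℕ) then 1 else 0)]
      exact Fintype.sum_equiv (S.orderIsoOfFin hcard).toEquiv _ _ (fun t => rfl)
    rw [Finset.sum_congr rfl (fun i _ => e1 i)]
    rw [Equiv.sum_comp α (fun a => ∑ x ∈ S,
      if x < (((Finset.range (n-1) \ S).orderIsoOfFin (cardA n p S hp hS hcard)) a : ℕ)
      then 1 else 0)]
    rw [← Finset.sum_coe_sort (Finset.range (n-1) \ S)
      (fun a => ∑ x ∈ S, if x < a then 1 else 0)]
    exact Fintype.sum_equiv ((Finset.range (n-1) \ S).orderIsoOfFin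
      (cardA n p S hp hS hcard)).toEquiv _ _ (fun a => rfl)
  -- assemble
  rw [haid, aN_decomp W n p hp hmax, dN_decomp W n p hp hmax, hcross]
  omega

end AidComp

section Inverse

noncomputable def Sof (n p : ℕ) (hp : p < n) (σ : Equiv.Perm (Fin n)) : Finset ℕ :=
  Finset.image (fun t : Fin (n-1-p) =>
    ((σ ⟨p+1+(t:ℕ), by have := t.2; omega⟩ : Fin n) : ℕ)) Finset.univ

lemma val_lt_of_ne (n p : ℕ) (hp : p < n) (σ : Equiv.Perm (Fin n))
    (hσ : σ ⟨p, hp⟩ = ⟨n-1, by omega⟩) (x : Fin n) (hx : x ≠ (⟨p, hp⟩ : Fin n)) :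
    ((σ x : Fin n) : ℕ) < n - 1 := by
  have h1 : (σ x : Fin n) ≠ ⟨n-1, by omega⟩ := by
    intro hc
    exact hx (σ.injective (hc.trans hσ.symm))
  have h2 := (σ x).2
  by_cases h : ((σ x : Fin n) : ℕ) = n - 1
  · exact absurd (Fin.ext h) h1
  · omega

lemma Sof_sub (n p : ℕ) (hp : p < n) (σ : Equiv.Perm (Fin n))
    (hσ : σ ⟨p, hp⟩ = ⟨n-1, by omega⟩) : Sof n p hp σ ⊆ Finset.range (n-1) := by
  intro a ha
  rw [Sof, Finset.mem_image] at ha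
  obtain ⟨t, -, rfl⟩ := ha
  rw [Finset.mem_range]
  exact val_lt_of_ne n p hp σ hσ _
    (by intro hc; have := congrArg Fin.val hc; simp at this; omega)

lemma Sof_card (n p : ℕ) (hp : p < n) (σ : Equiv.Perm (Fin n)) :
    (Sof n p hp σ).card = n - 1 - p := by
  rw [Sof, Finset.card_image_of_injective _ ?_, Finset.card_univ, Fintype.card_fin]
  intro t t' htt'
  have h1 : (σ ⟨p+1+(t:ℕ), by have := t.2; omega⟩ : Fin n)
      = σ ⟨p+1+(t':ℕ), by have := t'.2; omega⟩ := Fin.ext htt'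
  have h2 := σ.injective h1
  have h3 := congrArg Fin.val h2
  simp at h3
  exact Fin.ext (by omega)

lemma mem_A_of_lt (n p : ℕ) (hp : p < n) (σ : Equiv.Perm (Fin n))
    (hσ : σ ⟨p, hp⟩ = ⟨n-1, by omega⟩) (i : ℕ) (hi : i < p) :
    ((σ ⟨i, by omega⟩ : Fin n) : ℕ) ∈ Finset.range (n-1) \ Sof n p hp σ := by
  rw [Finset.mem_sdiff, Finset.mem_range]
  constructor
  · exact val_lt_of_ne n p hp σ hσ _
      (by intro hc; have := congrArg Fin.val hc; simp at this; omega)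
  · rw [Sof, Finset.mem_image]
    rintro ⟨t, -, hv⟩
    have h1 := σ.injective (Fin.ext hv)
    have h2 := congrArg Fin.val h1
    simp at h2
    omega

lemma mem_S_of_gt (n p : ℕ) (hp : p < n) (σ : Equiv.Perm (Fin n)) (t : ℕ) (ht : t < n-1-p) :
    ((σ ⟨p+1+t, by omega⟩ : Fin n) : ℕ) ∈ Sof n p hp σ := by
  rw [Sof, Finset.mem_image]
  exact ⟨⟨t, ht⟩, Finset.mem_univ _, rfl⟩

noncomputable def alphaF (n p : ℕ) (hp : p < n) (σ : Equiv.Perm (Fin n))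
    (hσ : σ ⟨p, hp⟩ = ⟨n-1, by omega⟩) : Fin p → Fin p := fun i =>
  ((Finset.range (n-1) \ Sof n p hp σ).orderIsoOfFin
    (cardA n p (Sof n p hp σ) hp (Sof_sub n p hp σ hσ) (Sof_card n p hp σ))).symm
    ⟨((σ ⟨(i:ℕ), by have := i.2; omega⟩ : Fin n) : ℕ), mem_A_of_lt n p hp σ hσ (i:ℕ) i.2⟩

noncomputable def betaF (n p : ℕ) (hp : p < n) (σ : Equiv.Perm (Fin n)) :
    Fin (n-1-p) → Fin (n-1-p) := fun t =>
  ((Sof n p hp σ).orderIsoOfFin (Sof_card n p hp σ)).symm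
    ⟨((σ ⟨p+1+(t:ℕ), by have := t.2; omega⟩ : Fin n) : ℕ), mem_S_of_gt n p hp σ (t:ℕ) t.2⟩

noncomputable def alphaP (n p : ℕ) (hp : p < n) (σ : Equiv.Perm (Fin n))
    (hσ : σ ⟨p, hp⟩ = ⟨n-1, by omega⟩) : Equiv.Perm (Fin p) :=
  Equiv.ofBijective (alphaF n p hp σ hσ) (Finite.injective_iff_bijective.mp (by
    intro i i' hii'
    rw [alphaF] at hii'
    have h1 := (((Finset.range (n-1) \ Sof n p hp σ).orderIsoOfFin
      (cardA n p (Sof n p hp σ) hp (Sof_sub n p hp σ hσ) (Sof_card n p hp σ))).symm).injective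
      hii'
    have h2 := σ.injective (Fin.ext (congrArg Subtype.val h1))
    have h3 := congrArg Fin.val h2
    simp at h3
    exact Fin.ext h3))

noncomputable def betaP (n p : ℕ) (hp : p < n) (σ : Equiv.Perm (Fin n)) :
    Equiv.Perm (Fin (n-1-p)) :=
  Equiv.ofBijective (betaF n p hp σ) (Finite.injective_iff_bijective.mp (by
    intro t t' htt'
    rw [betaF] at htt'
    have h1 := (((Sof n p hp σ).orderIsoOfFin (Sof_card n p hp σ)).symm).injective htt'
    have h2 := σ.injective (Fin.ext (congrArg Subtype.val h1))
    have h3 := congrArg Fin.val h2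
    simp at h3
    exact Fin.ext (by omega)))

end Inverse

lemma iso_val_congr {s s' : Finset ℕ} {k : ℕ} (h : s = s') (hs : s.card = k)
    (hs' : s'.card = k) (i : Fin k) :
    ((s.orderIsoOfFin hs i : ℕ)) = ((s'.orderIsoOfFin hs' i : ℕ)) := by subst h; rfl

section Roundtrip

variable (n p : ℕ) (hp : p < n) (S : Finset ℕ)
  (hS : S ⊆ Finset.range (n-1)) (hcard : S.card = n-1-p)
  (α : Equiv.Perm (Fin p)) (β : Equiv.Perm (Fin (n-1-p)))

lemma buildP_at_p : buildP n p hp S hS hcard α β ⟨p, hp⟩ = ⟨n-1, by omega⟩ :=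
  Fin.ext (buildF_val_eq n p hp S hS hcard α β ⟨p, hp⟩ rfl)

lemma Sof_buildP : Sof n p hp (buildP n p hp S hS hcard α β) = S := by
  apply Finset.Subset.antisymm
  · intro a ha
    rw [Sof, Finset.mem_image] at ha
    obtain ⟨t, -, rfl⟩ := ha
    exact buildF_mem_gt n p hp S hS hcard α β ⟨p+1+(t:ℕ), by have := t.2; omega⟩
      (by simp; omega)
  · intro a ha
    rw [Sof, Finset.mem_image]
    refine ⟨β.symm ((S.orderIsoOfFin hcard).symm ⟨a, ha⟩), Finset.mem_univ _, ?_⟩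
    rw [buildP_apply, buildF_val_gt n p hp S hS hcard α β _ (by simp; omega)]
    have e1 : (⟨((⟨p+1+((β.symm ((S.orderIsoOfFin hcard).symm ⟨a, ha⟩) : Fin (n-1-p)) : ℕ),
        by have := (β.symm ((S.orderIsoOfFin hcard).symm ⟨a, ha⟩)).2; omega⟩ : Fin n) : ℕ)
        - p - 1, by
          have := (β.symm ((S.orderIsoOfFin hcard).symm ⟨a, ha⟩)).2; simp; omega⟩
        : Fin (n-1-p))
        = β.symm ((S.orderIsoOfFin hcard).symm ⟨a, ha⟩) := Fin.ext (by simp; omega)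
    rw [e1, Equiv.apply_symm_apply, OrderIso.apply_symm_apply]

lemma alphaP_buildP (h' : buildP n p hp S hS hcard α β ⟨p, hp⟩ = ⟨n-1, by omega⟩) :
    alphaP n p hp (buildP n p hp S hS hcard α β) h' = α := by
  apply Equiv.ext
  intro i
  show alphaF n p hp (buildP n p hp S hS hcard α β) h' i = α i
  rw [alphaF, OrderIso.symm_apply_eq]
  refine Subtype.ext ?_
  show ((buildP n p hp S hS hcard α β ⟨(i:ℕ), by have := i.2; omega⟩ : Fin n) : ℕ) = _
  rw [buildP_apply, buildF_val_lt n p hp S hS hcard α β _ i.2]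
  rw [iso_val_congr (show Finset.range (n-1) \ Sof n p hp (buildP n p hp S hS hcard α β)
      = Finset.range (n-1) \ S by rw [Sof_buildP])
    (cardA n p (Sof n p hp (buildP n p hp S hS hcard α β)) hp
      (Sof_sub n p hp _ h') (Sof_card n p hp _))
    (cardA n p S hp hS hcard)] at *

lemma betaP_buildP : betaP n p hp (buildP n p hp S hS hcard α β) = β := by
  apply Equiv.ext
  intro t
  show betaF n p hp (buildP n p hp S hS hcard α β) t = β t
  rw [betaF, OrderIso.symm_apply_eq]
  refine Subtype.ext ?_
  show ((buildP n p hp S hS hcard α β ⟨p+1+(t:ℕ), by have := t.2; omega⟩ : Fin n) : ℕ) = _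
  rw [buildP_apply, buildF_val_gt n p hp S hS hcard α β _ (by simp; omega)]
  rw [iso_val_congr (Sof_buildP n p hp S hS hcard α β)
    (Sof_card n p hp _) hcard] at *
  exact congrArg (fun x => ((S.orderIsoOfFin hcard) (β x) : ℕ)) (Fin.ext (by simp; omega))

lemma buildP_Sof (σ : Equiv.Perm (Fin n)) (hσ : σ ⟨p, hp⟩ = ⟨n-1, by omega⟩) :
    buildP n p hp (Sof n p hp σ) (Sof_sub n p hp σ hσ) (Sof_card n p hp σ)
      (alphaP n p hp σ hσ) (betaP n p hp σ) = σ := by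
  apply Equiv.ext
  intro x
  apply Fin.ext
  rw [buildP_apply]
  rcases lt_trichotomy ((x:ℕ)) p with h | h | h
  · rw [buildF_val_lt n p hp _ _ _ _ _ x h]
    show ((Finset.range (n-1) \ Sof n p hp σ).orderIsoOfFin _
      (alphaF n p hp σ hσ ⟨(x:ℕ), h⟩) : ℕ) = _
    rw [alphaF, OrderIso.apply_symm_apply]
  · rw [buildF_val_eq n p hp _ _ _ _ _ x h]
    have : x = (⟨p, hp⟩ : Fin n) := Fin.ext h
    rw [this, hσ]
  · rw [buildF_val_gt n p hp _ _ _ _ _ x h]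
    show ((Sof n p hp σ).orderIsoOfFin _
      (betaF n p hp σ ⟨(x:ℕ) - p - 1, by have := x.2; omega⟩) : ℕ) = _
    rw [betaF, OrderIso.apply_symm_apply]
    exact congrArg (fun z => ((σ z : Fin n) : ℕ)) (Fin.ext (by simp; omega))

end Roundtrip

lemma master (n p : ℕ) (hp : p < n) :
    (∑ σ ∈ Finset.univ.filter
        (fun σ : Equiv.Perm (Fin n) => σ ⟨p, hp⟩ = ⟨n-1, by omega⟩),
      (Polynomial.X : Polynomial ℤ) ^ aidP σ)
    = (∑ S ∈ (Finset.range (n-1)).powersetCard (n-1-p),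
        (Polynomial.X : Polynomial ℤ) ^ crossS (n-1) S)
      * Polynomial.X ^ ((if 0 < p then n-1-p else 0) + (if p+1 < n then 1 else 0))
      * aidGen p * aidGen (n-1-p) := by
  have key : ∑ x ∈ ((Finset.range (n-1)).powersetCard (n-1-p)) ×ˢ
        (Finset.univ : Finset (Equiv.Perm (Fin p) × Equiv.Perm (Fin (n-1-p)))),
      (Polynomial.X : Polynomial ℤ) ^ (aidP x.2.1 + aidP x.2.2 + crossS (n-1) x.1
        + ((if 0 < p then n-1-p else 0) + (if p+1 < n then 1 else 0)))
      = ∑ σ ∈ Finset.univ.filter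
          (fun σ : Equiv.Perm (Fin n) => σ ⟨p, hp⟩ = ⟨n-1, by omega⟩),
        (Polynomial.X : Polynomial ℤ) ^ aidP σ := by
    refine Finset.sum_bij'
      (fun x hx => buildP n p hp x.1
        (Finset.mem_powersetCard.mp (Finset.mem_product.mp hx).1).1
        (Finset.mem_powersetCard.mp (Finset.mem_product.mp hx).1).2
        x.2.1 x.2.2)
      (fun σ hσ => (Sof n p hp σ,
        alphaP n p hp σ (Finset.mem_filter.mp hσ).2, betaP n p hp σ))
      ?_ ?_ ?_ ?_ ?_
    · intro x hx
      rw [Finset.mem_filter]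
      exact ⟨Finset.mem_univ _, buildP_at_p n p hp _ _ _ _ _⟩
    · intro σ hσ
      rw [Finset.mem_product]
      refine ⟨?_, Finset.mem_univ _⟩
      rw [Finset.mem_powersetCard]
      exact ⟨Sof_sub n p hp σ (Finset.mem_filter.mp hσ).2, Sof_card n p hp σ⟩
    · intro x hx
      have h1 := Sof_buildP n p hp x.1
        (Finset.mem_powersetCard.mp (Finset.mem_product.mp hx).1).1
        (Finset.mem_powersetCard.mp (Finset.mem_product.mp hx).1).2
        x.2.1 x.2.2
      have h2 := alphaP_buildP n p hp x.1
        (Finset.mem_powersetCard.mp (Finset.mem_product.mp hx).1).1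
        (Finset.mem_powersetCard.mp (Finset.mem_product.mp hx).1).2
        x.2.1 x.2.2 (buildP_at_p n p hp _ _ _ _ _)
      have h3 := betaP_buildP n p hp x.1
        (Finset.mem_powersetCard.mp (Finset.mem_product.mp hx).1).1
        (Finset.mem_powersetCard.mp (Finset.mem_product.mp hx).1).2
        x.2.1 x.2.2
      exact Prod.ext h1 (Prod.ext h2 h3)
    · intro σ hσ
      exact buildP_Sof n p hp ∅ σ (Finset.mem_filter.mp hσ).2
    · intro x hx
      rw [aidP_buildP n p hp x.1
        (Finset.mem_powersetCard.mp (Finset.mem_product.mp hx).1).1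
        (Finset.mem_powersetCard.mp (Finset.mem_product.mp hx).1).2
        x.2.1 x.2.2]
  rw [← key, Finset.sum_product]
  have inner : ∀ S : Finset ℕ, (∑ q ∈ (Finset.univ :
        Finset (Equiv.Perm (Fin p) × Equiv.Perm (Fin (n-1-p)))),
      (Polynomial.X : Polynomial ℤ) ^ (aidP q.1 + aidP q.2 + crossS (n-1) S
        + ((if 0 < p then n-1-p else 0) + (if p+1 < n then 1 else 0))))
      = (Polynomial.X : Polynomial ℤ) ^ crossS (n-1) S *
        (aidGen p * aidGen (n-1-p) *
          Polynomial.X ^ ((if 0 < p then n-1-p else 0) + (if p+1 < n then 1 else 0))) := by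
    intro S
    rw [Fintype.sum_prod_type, aidGen, aidGen]
    have e1 : ∀ a : Equiv.Perm (Fin p),
        (∑ b : Equiv.Perm (Fin (n-1-p)), (Polynomial.X : Polynomial ℤ) ^ (aidP a + aidP b
          + crossS (n-1) S + ((if 0 < p then n-1-p else 0) + (if p+1 < n then 1 else 0))))
        = (Polynomial.X : Polynomial ℤ) ^ aidP a *
          ((∑ b : Equiv.Perm (Fin (n-1-p)), (Polynomial.X : Polynomial ℤ) ^ aidP b) *
            ((Polynomial.X : Polynomial ℤ) ^ crossS (n-1) S *
              Polynomial.X ^ ((if 0 < p then n-1-p else 0) + (if p+1 < n then 1 else 0)))) := by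
      intro a
      rw [Finset.sum_mul, Finset.mul_sum]
      refine Finset.sum_congr rfl fun b _ => ?_
      rw [pow_add, pow_add, pow_add]
      ring
    rw [Finset.sum_congr rfl (fun a _ => e1 a), ← Finset.sum_mul]
    ring
  rw [Finset.sum_congr rfl (fun S _ => inner S)]
  rw [← Finset.sum_mul]
  ring

lemma aidP_zero_perm (σ : Equiv.Perm (Fin 0)) : aidP σ = 0 := by
  rw [aidP, aiW, desF]
  have h1 : (Finset.univ : Finset (Fin 0 × Fin 0)) = ∅ := by
    ext x
    exact absurd x.1.2 (by omega)
  have h2 : (Finset.univ : Finset (Fin (0-1))) = ∅ := by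
    ext x
    exact absurd x.2 (by omega)
  rw [h1, h2]
  simp

lemma aidGen_zero : aidGen 0 = 1 := by
  rw [aidGen]
  rw [Finset.sum_congr rfl (fun σ _ => by rw [aidP_zero_perm σ, pow_zero])]
  rw [Finset.sum_const, Finset.card_univ]
  simp


lemma crossS_empty (m : ℕ) : crossS m ∅ = 0 := by
  simp [crossS]

lemma crossS_full (m : ℕ) : crossS m (Finset.range m) = 0 := by
  rw [crossS]
  refine Finset.sum_eq_zero fun x hx => Finset.sum_eq_zero fun y hy => ?_
  rw [if_neg]
  rintro ⟨-, h2, -⟩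
  exact h2 hy

/-- recurrence in Proposition 6.3 of Linusson–Shareshian–Wachs: for
`n ≥ 2` and `j ∈ [n]`, the sum `∑ q^{aid σ}` over all `σ ∈ S_n` with `σ(n-j+1) = n`
equals `F_{n-1}(q)` if `j = 1`; `q F_{n-1}(q)` if `j = n`; and
`[n-1 choose j-1]_q q^j F_{j-1}(q) F_{n-j}(q)` if `2 ≤ j ≤ n-1`.
(Positions and values are 1-indexed, so `σ(n-j+1) = n` reads `σ ⟨n-j⟩ = ⟨n-1⟩` in
0-indexed terms.) -/
theorem statement_11 (n : ℕ) (hn : 2 ≤ n) (j : ℕ) (hj1 : 1 ≤ j) (hjn : j ≤ n) :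
    (∑ σ ∈ Finset.univ.filter
        (fun σ : Equiv.Perm (Fin n) => σ ⟨n - j, by omega⟩ = ⟨n - 1, by omega⟩),
      (Polynomial.X : Polynomial ℤ) ^ aidP σ) =
      if j = 1 then aidGen (n - 1)
      else if j = n then Polynomial.X * aidGen (n - 1)
      else qBinom (n - 1) (j - 1) * Polynomial.X ^ j * aidGen (j - 1) * aidGen (n - j) := by
  have hm : (∑ σ ∈ Finset.univ.filter
        (fun σ : Equiv.Perm (Fin n) => σ ⟨n - j, by omega⟩ = ⟨n - 1, by omega⟩),
      (Polynomial.X : Polynomial ℤ) ^ aidP σ)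
      = (∑ S ∈ (Finset.range (n-1)).powersetCard (n-1-(n-j)),
          (Polynomial.X : Polynomial ℤ) ^ crossS (n-1) S)
        * Polynomial.X ^ ((if 0 < n-j then n-1-(n-j) else 0) + (if (n-j)+1 < n then 1 else 0))
        * aidGen (n-j) * aidGen (n-1-(n-j)) := master n (n-j) (by omega)
  rw [hm]
  by_cases h1 : j = 1
  · subst h1
    rw [if_pos rfl]
    have e0 : n - 1 - (n - 1) = 0 := by omega
    rw [show n - 1 = n - 1 from rfl] at *
    rw [e0]
    rw [Finset.powersetCard_zero, Finset.sum_singleton, crossS_empty, pow_zero]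
    rw [if_pos (by omega : 0 < n - 1), if_neg (by omega : ¬ (n-1)+1 < n)]
    rw [aidGen_zero, pow_zero]
    ring
  · by_cases h2 : j = n
    · rw [if_neg h1, if_pos h2]
      have e0 : n - j = 0 := by omega
      rw [e0]
      have e1 : n - 1 - 0 = n - 1 := by omega
      rw [e1]
      have e2 : (Finset.range (n-1)).powersetCard (n-1) = {Finset.range (n-1)} := by
        have := Finset.powersetCard_self (Finset.range (n-1))
        rwa [Finset.card_range] at this
      rw [e2, Finset.sum_singleton, crossS_full, pow_zero]
      rw [if_neg (by omega : ¬ 0 < 0), if_pos (by omega : 0+1 < n)]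
      rw [aidGen_zero]
      ring
    · rw [if_neg h1, if_neg h2]
      have e0 : n - 1 - (n - j) = j - 1 := by omega
      rw [e0, qBinom_sum]
      rw [if_pos (by omega : 0 < n - j), if_pos (by omega : (n-j)+1 < n)]
      rw [show (j - 1) + 1 = j from by omega]
      ring
end

section
/- For all positive integers m and n, the sum of t^{bars(w)} over all banners w of length n with underlying word |w| ∈ [m]^n equals Σ_{k=0}^{n−1} C(n−1,k)·t^k·Σ_{u ∈ [m]^{n−k}} t^{des(u)}, as polynomials in t. -/
attribute [local instance] Classical.propDecidable

open Polynomial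

/-- The number of barred letters of a barred word whose bars are recorded by `b`. -/
noncomputable def barsCount {n : ℕ} (b : Fin n → Bool) : ℕ :=
  (Finset.univ.filter fun i : Fin n => b i = true).card

/-- The barred word with underlying word `v` and bars recorded by `b` is a banner:
the last letter is unbarred; if `|w_i| < |w_{i+1}|` then `w_i` is unbarred; and if
`|w_i| > |w_{i+1}|` then `w_i` is barred. -/
def IsBanner {n : ℕ} (v : Fin n → ℕ) (b : Fin n → Bool) : Prop :=
  (∀ _ : 0 < n, b ⟨n - 1, by omega⟩ = false) ∧
    (∀ i : ℕ, ∀ h : i + 1 < n, v ⟨i, by omega⟩ < v ⟨i + 1, h⟩ → b ⟨i, by omega⟩ = false) ∧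
    ∀ i : ℕ, ∀ h : i + 1 < n, v ⟨i + 1, h⟩ < v ⟨i, by omega⟩ → b ⟨i, by omega⟩ = true

/-! ### Auxiliary definitions and lemmas -/

/-- Number of plateaus (equal adjacent letters). -/
noncomputable def eqF {m : ℕ} (w : Fin m → ℕ) : ℕ :=
  (Finset.univ.filter fun i : Fin (m - 1) =>
      w ⟨(i : ℕ) + 1, by have := i.2; omega⟩ = w ⟨(i : ℕ), by have := i.2; omega⟩).card

lemma desF_eq_sum {ℓ : ℕ} (w : Fin (ℓ+1) → ℕ) :
    desF w = ∑ i : Fin ℓ, if w i.succ < w i.castSucc then 1 else 0 := by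
  rw [desF, Finset.card_filter]; rfl

lemma eqF_eq_sum {ℓ : ℕ} (w : Fin (ℓ+1) → ℕ) :
    eqF w = ∑ i : Fin ℓ, if w i.succ = w i.castSucc then 1 else 0 := by
  rw [eqF, Finset.card_filter]; rfl

lemma barsCount_eq_sum {n : ℕ} (b : Fin n → Bool) :
    barsCount b = ∑ i : Fin n, if b i = true then 1 else 0 := by
  rw [barsCount, Finset.card_filter]

lemma desF_cons {ℓ : ℕ} (w : Fin (ℓ+1) → ℕ) (a : ℕ) :
    desF (Fin.cons a w : Fin (ℓ+2) → ℕ) = (if w 0 < a then 1 else 0) + desF w := by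
  rw [desF_eq_sum, desF_eq_sum, Fin.sum_univ_succ]
  simp [← Fin.succ_castSucc]

lemma eqF_cons {ℓ : ℕ} (w : Fin (ℓ+1) → ℕ) (a : ℕ) :
    eqF (Fin.cons a w : Fin (ℓ+2) → ℕ) = (if w 0 = a then 1 else 0) + eqF w := by
  rw [eqF_eq_sum, eqF_eq_sum, Fin.sum_univ_succ]
  simp [← Fin.succ_castSucc]

lemma sum_piFinset_cons {M : Type*} [AddCommMonoid M] (ℓ : ℕ) (S : Finset ℕ)
    (f : (Fin (ℓ+1) → ℕ) → M) :
    ∑ v ∈ Fintype.piFinset (fun _ : Fin (ℓ+1) => S), f v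
      = ∑ a ∈ S, ∑ w ∈ Fintype.piFinset (fun _ : Fin ℓ => S), f (Fin.cons a w) := by
  rw [← Finset.sum_product']
  apply Finset.sum_nbij' (fun v => (v 0, Fin.tail v)) (fun p => Fin.cons p.1 p.2)
  · intro v hv
    simp only [Fintype.mem_piFinset] at hv
    simp [Finset.mem_product, Fintype.mem_piFinset, Fin.tail, hv]
  · intro p hp
    simp only [Finset.mem_product, Fintype.mem_piFinset] at hp
    simp only [Fintype.mem_piFinset]
    intro i
    refine Fin.cases ?_ ?_ i <;> simp [hp.1, hp.2]
  · intro v hv; exact Fin.cons_self_tail v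
  · intro p hp; simp [Fin.tail_cons]
  · intro v hv; rw [Fin.cons_self_tail]

def Ok {ℓ : ℕ} (v : Fin (ℓ+1) → ℕ) (i : Fin (ℓ+1)) (x : Bool) : Prop :=
  ((i : ℕ) + 1 = ℓ + 1 → x = false) ∧
    (∀ h : (i:ℕ)+1 < ℓ+1, v i < v ⟨(i:ℕ)+1, h⟩ → x = false) ∧
    (∀ h : (i:ℕ)+1 < ℓ+1, v ⟨(i:ℕ)+1, h⟩ < v i → x = true)

lemma isBanner_iff {ℓ : ℕ} (v : Fin (ℓ+1) → ℕ) (b : Fin (ℓ+1) → Bool) :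
    IsBanner v b ↔ ∀ i, Ok v i (b i) := by
  constructor
  · rintro ⟨h1, h2, h3⟩ i
    refine ⟨fun hi => ?_, fun h hlt => ?_, fun h hlt => ?_⟩
    · have : i = ⟨ℓ+1-1, by omega⟩ := by ext; simp; omega
      rw [this]; exact h1 (by omega)
    · have := h2 i h; simp only [Fin.eta] at this; exact this hlt
    · have := h3 i h; simp only [Fin.eta] at this; exact this hlt
  · intro h
    refine ⟨fun _ => ?_, fun i hi hlt => ?_, fun i hi hlt => ?_⟩
    · exact (h ⟨ℓ+1-1, by omega⟩).1 (by simp)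
    · exact (h ⟨i, by omega⟩).2.1 hi hlt
    · exact (h ⟨i, by omega⟩).2.2 hi hlt

/-- Summing over bar patterns of a fixed underlying word. -/
lemma banner_inner_sum {ℓ : ℕ} (v : Fin (ℓ+1) → ℕ) :
    (∑ b : Fin (ℓ+1) → Bool, if IsBanner v b then (X : Polynomial ℤ) ^ barsCount b else 0)
      = X ^ desF v * (1 + X) ^ eqF v := by
  have key : ∀ b : Fin (ℓ+1) → Bool,
      (if IsBanner v b then (X : Polynomial ℤ) ^ barsCount b else 0)
        = ∏ i, (if Ok v i (b i) then (X:Polynomial ℤ) ^ (if b i = true then 1 else 0) else 0) := by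
    intro b
    by_cases hB : IsBanner v b
    · rw [if_pos hB]
      have hok := (isBanner_iff v b).mp hB
      calc (X : Polynomial ℤ) ^ barsCount b
          = ∏ i, (X:Polynomial ℤ) ^ (if b i = true then 1 else 0) := by
            rw [barsCount_eq_sum, ← Finset.prod_pow_eq_pow_sum]
        _ = _ := by
            apply Finset.prod_congr rfl
            intro i _; rw [if_pos (hok i)]
    · rw [if_neg hB]
      rw [isBanner_iff] at hB
      push_neg at hB
      obtain ⟨i, hi⟩ := hB
      rw [eq_comm]
      apply Finset.prod_eq_zero (Finset.mem_univ i)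
      rw [if_neg hi]
  rw [Finset.sum_congr rfl (fun b _ => key b)]
  rw [show (Finset.univ : Finset (Fin (ℓ+1) → Bool))
      = Fintype.piFinset (fun _ => (Finset.univ : Finset Bool)) from (Fintype.piFinset_univ).symm]
  rw [← Finset.prod_univ_sum (fun _ => (Finset.univ : Finset Bool))
    (fun i y => if Ok v i y then (X:Polynomial ℤ)^(if y = true then 1 else 0) else 0)]
  rw [Fin.prod_univ_castSucc]
  have hlast : (∑ x : Bool, if Ok v (Fin.last ℓ) x then (X:Polynomial ℤ) ^ (if x = true then 1 else 0) else 0) = 1 := by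
    have hOk : ∀ x, Ok v (Fin.last ℓ) x ↔ x = false := by
      intro x
      constructor
      · rintro ⟨h1, _, _⟩; exact h1 (by simp [Fin.last])
      · rintro rfl
        exact ⟨fun _ => rfl, fun h => by simp [Fin.last] at h, fun h => by simp [Fin.last] at h⟩
    simp [Fintype.sum_bool, hOk]
  rw [hlast, mul_one]
  have hfac : ∀ i : Fin ℓ,
      (∑ x : Bool, if Ok v i.castSucc x then (X:Polynomial ℤ) ^ (if x = true then 1 else 0) else 0)
        = X ^ (if v i.succ < v i.castSucc then 1 else 0)
            * (1+X) ^ (if v i.succ = v i.castSucc then 1 else 0) := by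
    intro i
    have hne : ((i.castSucc : ℕ) + 1 = ℓ + 1) ↔ False := by
      simp only [Fin.coe_castSucc, iff_false]; have := i.2; omega
    have hlt : ((i.castSucc : ℕ) + 1 < ℓ + 1) := by simpa using Nat.succ_lt_succ i.2
    have hmk : (⟨(i.castSucc : ℕ) + 1, hlt⟩ : Fin (ℓ+1)) = i.succ := rfl
    have hOk : ∀ x, Ok v i.castSucc x ↔
        ((v i.castSucc < v i.succ → x = false) ∧ (v i.succ < v i.castSucc → x = true)) := by
      intro x
      unfold Ok
      constructor
      · rintro ⟨_, h2, h3⟩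
        exact ⟨fun hl => h2 hlt (by rw [hmk]; exact hl), fun hl => h3 hlt (by rw [hmk]; exact hl)⟩
      · rintro ⟨h2, h3⟩
        refine ⟨fun hc => absurd hc (by simpa using hne.mp ∘ id), fun h hl => h2 ?_, fun h hl => h3 ?_⟩
        · rwa [hmk] at hl
        · rwa [hmk] at hl
    rcases lt_trichotomy (v i.succ) (v i.castSucc) with h | h | h
    · simp [Fintype.sum_bool, hOk, h, asymm h, h.ne]
    · simp [Fintype.sum_bool, hOk, h, lt_irrefl]; ring
    · simp [Fintype.sum_bool, hOk, h, asymm h, h.ne', not_lt_of_gt h]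
  rw [Finset.prod_congr rfl (fun i _ => hfac i), Finset.prod_mul_distrib,
    Finset.prod_pow_eq_pow_sum, Finset.prod_pow_eq_pow_sum,
    desF_eq_sum, eqF_eq_sum]

/-- Refined descent polynomial: words of length `j+1` with first letter `a`. -/
noncomputable def Apoly (m j : ℕ) (a : ℕ) : Polynomial ℤ :=
  ∑ u ∈ Fintype.piFinset (fun _ : Fin j => Finset.Icc 1 m),
    X ^ desF (Fin.cons a u : Fin (j+1) → ℕ)

/-- Refined banner polynomial: words of length `j+1` with first letter `a`. -/
noncomputable def Fpoly (m j : ℕ) (a : ℕ) : Polynomial ℤ :=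
  ∑ u ∈ Fintype.piFinset (fun _ : Fin j => Finset.Icc 1 m),
    X ^ desF (Fin.cons a u : Fin (j+1) → ℕ) * (1 + X) ^ eqF (Fin.cons a u : Fin (j+1) → ℕ)

lemma desF_one (w : Fin 1 → ℕ) : desF w = 0 := by
  rw [desF]
  convert Finset.card_empty
  ext i; have := i.2; simp at this

lemma eqF_one (w : Fin 1 → ℕ) : eqF w = 0 := by
  rw [eqF]
  convert Finset.card_empty
  ext i; have := i.2; simp at this

lemma Apoly_zero (m a : ℕ) : Apoly m 0 a = 1 := by
  rw [Apoly]
  rw [Finset.sum_congr rfl (fun u _ => by rw [desF_one])]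
  simp

lemma Fpoly_zero (m a : ℕ) : Fpoly m 0 a = 1 := by
  rw [Fpoly]
  rw [Finset.sum_congr rfl (fun u _ => by rw [desF_one, eqF_one])]
  simp

lemma Apoly_succ (m j a : ℕ) :
    Apoly m (j+1) a
      = ∑ b ∈ Finset.Icc 1 m, (if b < a then (X:Polynomial ℤ) else 1) * Apoly m j b := by
  rw [Apoly, sum_piFinset_cons]
  apply Finset.sum_congr rfl
  intro b _
  rw [Apoly, Finset.mul_sum]
  apply Finset.sum_congr rfl
  intro w _
  rw [desF_cons (Fin.cons b w) a, Fin.cons_zero, pow_add]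
  by_cases h : b < a <;> simp [h]

lemma Fpoly_succ (m j a : ℕ) :
    Fpoly m (j+1) a = ∑ b ∈ Finset.Icc 1 m,
      (if b < a then (X:Polynomial ℤ) else if b = a then 1 + X else 1) * Fpoly m j b := by
  rw [Fpoly, sum_piFinset_cons]
  apply Finset.sum_congr rfl
  intro b _
  rw [Fpoly, Finset.mul_sum]
  apply Finset.sum_congr rfl
  intro w _
  rw [desF_cons (Fin.cons b w) a, eqF_cons (Fin.cons b w) a, Fin.cons_zero, pow_add, pow_add]
  rcases lt_trichotomy b a with h | h | h
  · simp [h, h.ne]; ring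
  · simp [h, lt_irrefl]; ring
  · simp [h, h.ne', not_lt_of_gt h]

lemma main_induction (m : ℕ) : ∀ j, ∀ a ∈ Finset.Icc 1 m, Fpoly m j a
    = ∑ k ∈ Finset.range (j+1), (j.choose k : Polynomial ℤ) * X ^ k * Apoly m (j-k) a := by
  intro j
  induction j with
  | zero => intro a _; simp [Fpoly_zero, Apoly_zero]
  | succ j ih =>
    intro a ha
    rw [Fpoly_succ]
    have split : ∀ b, (if b < a then (X:Polynomial ℤ) else if b = a then 1 + X else 1)
        = (if b < a then (X:Polynomial ℤ) else 1) + (if b = a then X else 0) := by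
      intro b
      rcases lt_trichotomy b a with h | h | h
      · simp [h, h.ne]
      · simp [h, lt_irrefl]
      · simp [h.ne', not_lt_of_gt h]
    calc (∑ b ∈ Finset.Icc 1 m,
            (if b < a then (X:Polynomial ℤ) else if b = a then 1 + X else 1) * Fpoly m j b)
        = (∑ b ∈ Finset.Icc 1 m, (if b < a then (X:Polynomial ℤ) else 1) * Fpoly m j b)
            + (∑ b ∈ Finset.Icc 1 m, (if b = a then (X:Polynomial ℤ) else 0) * Fpoly m j b) := by
          rw [← Finset.sum_add_distrib]
          exact Finset.sum_congr rfl fun b _ => by rw [split b, add_mul]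
      _ = (∑ b ∈ Finset.Icc 1 m, (if b < a then (X:Polynomial ℤ) else 1) * Fpoly m j b)
            + X * Fpoly m j a := by
          congr 1
          rw [Finset.sum_congr rfl (fun b _ => by rw [ite_mul, zero_mul]),
            Finset.sum_ite_eq' (Finset.Icc 1 m) a (fun b => X * Fpoly m j b), if_pos ha]
      _ = (∑ b ∈ Finset.Icc 1 m, (if b < a then (X:Polynomial ℤ) else 1)
              * (∑ k ∈ Finset.range (j+1), (j.choose k : Polynomial ℤ) * X ^ k * Apoly m (j-k) b))
            + X * (∑ k ∈ Finset.range (j+1), (j.choose k : Polynomial ℤ) * X ^ k * Apoly m (j-k) a) := by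
          rw [Finset.sum_congr rfl (fun b hb => by rw [ih b hb]), ih a ha]
      _ = (∑ k ∈ Finset.range (j+1), (j.choose k : Polynomial ℤ) * X ^ k * Apoly m (j-k+1) a)
            + ∑ k ∈ Finset.range (j+1), (j.choose k : Polynomial ℤ) * X ^ (k+1) * Apoly m (j-k) a := by
          congr 1
          · rw [Finset.sum_congr rfl (fun b _ => Finset.mul_sum _ _ _), Finset.sum_comm]
            apply Finset.sum_congr rfl
            intro k _
            rw [Apoly_succ, Finset.mul_sum]
            exact Finset.sum_congr rfl fun b _ => by ring
          · rw [Finset.mul_sum]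
            exact Finset.sum_congr rfl fun k _ => by ring
      _ = ∑ k ∈ Finset.range (j+1+1), ((j+1).choose k : Polynomial ℤ) * X ^ k * Apoly m (j+1-k) a := by
          rw [Finset.sum_range_succ'
            (fun k => ((j+1).choose k : Polynomial ℤ) * X ^ k * Apoly m (j+1-k) a) (j+1)]
          have e1 : ∀ i ∈ Finset.range (j+1),
              ((j+1).choose (i+1) : Polynomial ℤ) * X ^ (i+1) * Apoly m (j+1-(i+1)) a
                = (j.choose i : Polynomial ℤ) * X ^ (i+1) * Apoly m (j-i) a
                  + (j.choose (i+1) : Polynomial ℤ) * X ^ (i+1) * Apoly m (j+1-(i+1)) a := by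
            intro i _
            have h : j + 1 - (i+1) = j - i := by omega
            rw [h, Nat.choose_succ_succ]
            push_cast; ring
          rw [Finset.sum_congr rfl e1, Finset.sum_add_distrib]
          have e2 : (∑ i ∈ Finset.range (j+1),
                (j.choose (i+1) : Polynomial ℤ) * X ^ (i+1) * Apoly m (j+1-(i+1)) a)
              + ((j+1).choose 0 : Polynomial ℤ) * X ^ 0 * Apoly m (j+1-0) a
              = ∑ k ∈ Finset.range (j+1+1), (j.choose k : Polynomial ℤ) * X ^ k * Apoly m (j+1-k) a := by
            rw [Finset.sum_range_succ'
              (fun k => (j.choose k : Polynomial ℤ) * X ^ k * Apoly m (j+1-k) a) (j+1)]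
            norm_num
          have e3 : (∑ k ∈ Finset.range (j+1+1), (j.choose k : Polynomial ℤ) * X ^ k * Apoly m (j+1-k) a)
              = ∑ k ∈ Finset.range (j+1), (j.choose k : Polynomial ℤ) * X ^ k * Apoly m (j-k+1) a := by
            rw [Finset.sum_range_succ]
            have : (j.choose (j+1) : Polynomial ℤ) = 0 := by
              rw [Nat.choose_succ_self]; push_cast; ring
            rw [this]
            simp only [zero_mul, add_zero]
            apply Finset.sum_congr rfl
            intro k hk
            have : j + 1 - k = j - k + 1 := by
              have := Finset.mem_range.mp hk; omega
            rw [this]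
          rw [add_assoc, e2, e3]
          ring

/-- eq. (8.9) of Linusson–Shareshian–Wachs: for `m, n ≥ 1`, the sum
of `t^{bars w}` over all banners `w` of length `n` with underlying word `|w| ∈ [m]^n`
equals `∑_{k=0}^{n-1} C(n-1,k) t^k ∑_{u ∈ [m]^{n-k}} t^{des u}` in `ℤ[t]`. -/
theorem statement_13 (m n : ℕ) (hm : 0 < m) (hn : 0 < n) :
    (∑ v ∈ Fintype.piFinset (fun _ : Fin n => Finset.Icc 1 m),
        ∑ b : Fin n → Bool,
          if IsBanner v b then (X : Polynomial ℤ) ^ barsCount b else 0) =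
      ∑ k ∈ Finset.range n, ((n - 1).choose k : Polynomial ℤ) * (X : Polynomial ℤ) ^ k *
        ∑ u ∈ Fintype.piFinset (fun _ : Fin (n - k) => Finset.Icc 1 m),
          (X : Polynomial ℤ) ^ desF u := by
  obtain ⟨ℓ, rfl⟩ : ∃ ℓ, n = ℓ + 1 := ⟨n - 1, by omega⟩
  calc (∑ v ∈ Fintype.piFinset (fun _ : Fin (ℓ+1) => Finset.Icc 1 m),
          ∑ b : Fin (ℓ+1) → Bool,
            if IsBanner v b then (X : Polynomial ℤ) ^ barsCount b else 0)
      = ∑ v ∈ Fintype.piFinset (fun _ : Fin (ℓ+1) => Finset.Icc 1 m),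
          (X:Polynomial ℤ) ^ desF v * (1 + X) ^ eqF v :=
        Finset.sum_congr rfl fun v _ => banner_inner_sum v
    _ = ∑ a ∈ Finset.Icc 1 m, Fpoly m ℓ a := by
        rw [sum_piFinset_cons ℓ (Finset.Icc 1 m)
          (fun v => (X:Polynomial ℤ) ^ desF v * (1 + X) ^ eqF v)]
        rfl
    _ = ∑ a ∈ Finset.Icc 1 m, ∑ k ∈ Finset.range (ℓ+1),
          (ℓ.choose k : Polynomial ℤ) * X ^ k * Apoly m (ℓ-k) a :=
        Finset.sum_congr rfl fun a ha => main_induction m ℓ a ha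
    _ = ∑ k ∈ Finset.range (ℓ+1), (ℓ.choose k : Polynomial ℤ) * X ^ k
          * ∑ a ∈ Finset.Icc 1 m, Apoly m (ℓ-k) a := by
        rw [Finset.sum_comm]
        exact Finset.sum_congr rfl fun k _ => by rw [Finset.mul_sum]
    _ = _ := by
        apply Finset.sum_congr rfl
        intro k hk
        have hk' : k ≤ ℓ := by simpa [Nat.lt_succ_iff] using hk
        have h1 : ℓ + 1 - k = (ℓ - k) + 1 := by omega
        have h2 : (ℓ + 1 - 1) = ℓ := by omega
        rw [h2, h1]
        congr 1
        rw [sum_piFinset_cons (ℓ-k) (Finset.Icc 1 m) (fun u => (X:Polynomial ℤ) ^ desF u)]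
        rfl
end

section
/- Fix n ≥ 1 and consider the set of weak compositions of n into n+1 parts, with two compositions declared cyclically equivalent if one is obtained from the other by cyclically rotating its parts. Then every cyclic equivalence class has exactly n+1 elements, and every cyclic equivalence class contains exactly one composition μ = (μ₁,…,μ_{n+1}) with μ_{n+1} = 0 and μ₁ + ⋯ + μ_j ≥ j for all j ∈ [n] (that is, exactly one representative whose first n parts form a parking composition of n). -/
/-- Cycle lemma core: if `s` is a "partial sum" function with window sum `n`
(`s (k+n+1) = s k + n`), then there is a unique `d ≤ n` whose shifted partial
sums dominate: `s d + j ≤ s (d + j)` for all `1 ≤ j ≤ n`. -/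
private lemma cycle_core (n : ℕ) (s : ℕ → ℕ)
    (hper : ∀ k, s (k + n + 1) = s k + n) :
    ∃! d : ℕ, d ≤ n ∧ ∀ j, 1 ≤ j → j ≤ n → s d + j ≤ s (d + j) := by
  have hex : ∃ d : ℕ, (d ≤ n ∧ ∀ j, 1 ≤ j → j ≤ n → s d + j ≤ s (d + j)) := by
    obtain ⟨d₀, h₀mem, h₀min⟩ :=
      Finset.exists_min_image (Finset.range (n+1)) (fun k => s k + n - k) ⟨0, by simp⟩
    set M := s d₀ + n - d₀ with hM
    set S : Finset ℕ := (Finset.range (n+1)).filter (fun k => s k + n - k = M) with hS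
    have hSne : S.Nonempty := ⟨d₀, Finset.mem_filter.mpr ⟨h₀mem, rfl⟩⟩
    set d := S.min' hSne with hd
    have hdS : d ∈ S := S.min'_mem hSne
    rw [hS, Finset.mem_filter, Finset.mem_range] at hdS
    obtain ⟨hdn, hdM⟩ := hdS
    have hdmin : ∀ m ∈ Finset.range (n+1), s d + n - d ≤ s m + n - m := by
      intro m hm
      have := h₀min m hm
      omega
    refine ⟨d, by omega, ?_⟩
    intro j hj1 hjn
    by_cases hc : d + j ≤ n
    · have := hdmin (d + j) (Finset.mem_range.mpr (by omega))
      omega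
    · have hm : d + j = (d + j - n - 1) + n + 1 := by omega
      set m := d + j - n - 1 with hmdef
      have h1 := hdmin m (Finset.mem_range.mpr (by omega))
      have h2 : s d + n - d ≠ s m + n - m := by
        intro he
        have hmS : m ∈ S := by
          rw [hS, Finset.mem_filter, Finset.mem_range]
          exact ⟨by omega, by omega⟩
        have := S.min'_le m hmS
        omega
      have h3 := hper m
      rw [hm]
      omega
  obtain ⟨d, hd⟩ := hex
  refine ⟨d, hd, ?_⟩
  intro d' hd'
  by_contra hne
  have key : ∀ a b : ℕ, a < b → b ≤ n →
      (∀ j, 1 ≤ j → j ≤ n → s a + j ≤ s (a + j)) →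
      (∀ j, 1 ≤ j → j ≤ n → s b + j ≤ s (b + j)) → False := by
    intro a b hab hbn hRa hRb
    have h1 := hRa (b - a) (by omega) (by omega)
    rw [show a + (b - a) = b from by omega] at h1
    have h2 := hRb (a + n + 1 - b) (by omega) (by omega)
    rw [show b + (a + n + 1 - b) = a + n + 1 from by omega] at h2
    have h3 := hper a
    omega
  rcases Nat.lt_or_ge d' d with h | h
  · exact key d' d h hd.1 hd'.2 hd.2
  · exact key d d' (by omega) hd'.1 hd.2 hd'.2

open Fin.CommRing

/-- from the proof of Theorem 8.1 of Linusson–Shareshian–Wachs: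
for `n ≥ 1`, under cyclic rotation of parts, every cyclic equivalence class of weak
compositions of `n` into `n + 1` parts has exactly `n + 1` elements, and each class
contains exactly one composition whose last part is `0` and whose first `n` parts form a
parking composition of `n` (i.e. `μ₁ + ⋯ + μ_j ≥ j` for all `j ∈ [n]`).
Here the rotations of `μ` are the compositions `i ↦ μ (i + d)` for `d : Fin (n+1)`. -/
theorem statement_19 (n : ℕ) (hn : 1 ≤ n) (μ : Fin (n + 1) → ℕ)
    (hμ : ∑ i, μ i = n) :
    (Finset.image (fun d : Fin (n + 1) => fun i : Fin (n + 1) => μ (i + d))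
        Finset.univ).card = n + 1 ∧
      ∃! d : Fin (n + 1),
        μ (⟨n, by omega⟩ + d) = 0 ∧
          ∀ j : ℕ, 1 ≤ j → j ≤ n →
            j ≤ ∑ i ∈ Finset.range j, μ (Fin.ofNat (n + 1) i + d) := by
  classical
  have hterm : ∀ (d : Fin (n+1)) (i : ℕ),
      μ ((d.val + i : ℕ) : Fin (n+1)) = μ ((i : Fin (n+1)) + d) := by
    intro d i
    congr 1
    push_cast [Fin.cast_val_eq_self]
    ring
  set g : ℕ → ℕ := fun k => μ ((k : ℕ) : Fin (n+1)) with hgdef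
  set s : ℕ → ℕ := fun k => ∑ i ∈ Finset.range k, g i with hsdef
  have hshift : ∀ a b : ℕ, s (a + b) = s a + ∑ i ∈ Finset.range b, g (a + i) := by
    intro a b
    induction b with
    | zero => simp
    | succ b ih =>
      have e1 : s (a + b + 1) = s (a + b) + g (a + b) := by
        simp only [hsdef]; rw [Finset.sum_range_succ]
      rw [show a + (b+1) = a + b + 1 from rfl, e1, ih, Finset.sum_range_succ, add_assoc]
  have hwin : ∀ a : ℕ, ∑ i ∈ Finset.range (n+1), g (a + i) = n := by
    intro a
    have h2 : ∑ i : Fin (n+1), μ ((a : Fin (n+1)) + i) = n :=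
      (Fintype.sum_equiv (Equiv.addLeft (a : Fin (n+1))) _ μ (fun i => rfl)).trans hμ
    calc ∑ i ∈ Finset.range (n+1), g (a + i)
        = ∑ i : Fin (n+1), μ ((a : Fin (n+1)) + i) := by
          rw [← Fin.sum_univ_eq_sum_range (fun i => g (a + i)) (n+1)]
          refine Finset.sum_congr rfl fun i _ => ?_
          simp only [hgdef]
          congr 1
          push_cast [Fin.cast_val_eq_self]
          ring
      _ = n := h2
  have hper : ∀ k, s (k + n + 1) = s k + n := by
    intro k
    show s (k + (n + 1)) = s k + n
    rw [hshift, hwin]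
  have hsum_eq : ∀ (d : Fin (n+1)) (j : ℕ),
      s (d.val + j) = s d.val + ∑ i ∈ Finset.range j, μ ((i : Fin (n+1)) + d) := by
    intro d j
    rw [hshift]
    congr 1
    refine Finset.sum_congr rfl fun i _ => ?_
    simp only [hgdef]
    exact hterm d i
  obtain ⟨D, ⟨hDn, hDR⟩, hDuniq⟩ := cycle_core n s hper
  have hzero : ∀ d : Fin (n+1),
      (∀ j, 1 ≤ j → j ≤ n → s d.val + j ≤ s (d.val + j)) →
      μ ((⟨n, by omega⟩ : Fin (n+1)) + d) = 0 := by
    intro d hR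
    have h1 := hR n hn le_rfl
    have h2 := hper d.val
    have h3 : s (d.val + n + 1) = s (d.val + n) + g (d.val + n) := by
      simp only [hsdef]
      rw [Finset.sum_range_succ]
    have h4 : g (d.val + n) = 0 := by omega
    have h5 : μ ((⟨n, by omega⟩ : Fin (n+1)) + d) = g (d.val + n) := by
      simp only [hgdef]
      rw [hterm d n]
      congr 2
      rw [Fin.natCast_eq_last]
      rfl
    omega
  have hRiff : ∀ d : Fin (n+1),
      (∀ j, 1 ≤ j → j ≤ n → s d.val + j ≤ s (d.val + j)) ↔
      (∀ j : ℕ, 1 ≤ j → j ≤ n → j ≤ ∑ i ∈ Finset.range j, μ ((i : Fin (n+1)) + d)) := by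
    intro d
    constructor
    · intro h j hj1 hjn
      have := h j hj1 hjn
      have h2 := hsum_eq d j
      omega
    · intro h j hj1 hjn
      have := h j hj1 hjn
      have h2 := hsum_eq d j
      omega
  have hP : ∀ d : Fin (n+1),
      ((μ ((⟨n, by omega⟩ : Fin (n+1)) + d) = 0 ∧ ∀ j : ℕ, 1 ≤ j → j ≤ n →
          j ≤ ∑ i ∈ Finset.range j, μ ((i : Fin (n+1)) + d)) ↔ d.val = D) := by
    intro d
    constructor
    · rintro ⟨-, h⟩
      exact hDuniq d.val ⟨d.is_le, (hRiff d).mpr h⟩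
    · intro h
      have hR : ∀ j, 1 ≤ j → j ≤ n → s d.val + j ≤ s (d.val + j) := by
        rw [h]; exact hDR
      exact ⟨hzero d hR, (hRiff d).mp hR⟩
  have hpart2 : ∃! d : Fin (n + 1),
      μ (⟨n, by omega⟩ + d) = 0 ∧ ∀ j : ℕ, 1 ≤ j → j ≤ n →
        j ≤ ∑ i ∈ Finset.range j, μ ((i : Fin (n + 1)) + d) := by
    refine ⟨⟨D, by omega⟩, (hP _).mpr rfl, fun y hy => Fin.ext ?_⟩
    exact (hP y).mp hy
  have hinj : Function.Injective
      (fun d : Fin (n+1) => fun i : Fin (n+1) => μ (i + d)) := by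
    intro d d' h
    have hpt : ∀ x : Fin (n+1), μ (x + d) = μ (x + d') := fun x => congrFun h x
    obtain ⟨E, hE, hEu⟩ := hpart2
    have key : ∀ x : Fin (n+1), μ (x + (E - d + d')) = μ (x + E) := by
      intro x
      have h1 : x + (E - d + d') = (x + (E - d)) + d' := by ring
      have h2 : x + E = (x + (E - d)) + d := by ring
      rw [h1, h2, hpt]
    have hE' : μ ((⟨n, by omega⟩ : Fin (n+1)) + (E - d + d')) = 0 ∧ ∀ j : ℕ, 1 ≤ j → j ≤ n →
        j ≤ ∑ i ∈ Finset.range j, μ ((i : Fin (n+1)) + (E - d + d')) := by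
      refine ⟨?_, ?_⟩
      · rw [key]; exact hE.1
      · intro j hj1 hjn
        calc j ≤ ∑ i ∈ Finset.range j, μ ((i : Fin (n+1)) + E) := hE.2 j hj1 hjn
          _ = _ := Finset.sum_congr rfl fun i _ => (key _).symm
    have h3 := hEu _ hE'
    have h4 : E - d + d = E := by ring
    exact (add_left_cancel (h3.trans h4.symm)).symm
  refine ⟨?_, hpart2⟩
  rw [Finset.card_image_of_injective _ hinj, Finset.card_univ, Fintype.card_fin]
end
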